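/- Let α be a linear order and let s, t : Fin m → α be two sequences such that (1) E(s) = E(t), and (2) s and t have the same multiset of values, i.e., for every a : α, the number of indices i with s(i) = a equals the number of indices i with t(i) = a. Then s = t. (That is, a string is uniquely determined by the multiset of its characters together with its rank encoding.) -/

import Mathlib

/- The rank encoding `E(s)` of a sequence `s : Fin m → α` over a linear order:
`E(s)(i) = d_i + 1` if `s i` equals some earlier character, and `d_i + 1/2` otherwise,
where `d_i` is the number of distinct values among `s 0, …, s (i-1)` strictly smaller
than `s i`. -/
open Classical in
noncomputable def rankEncode {m : ℕ} {α : Type*} [LinearOrder α] (s : Fin m → α) :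
    Fin m → ℚ := fun i =>
  ((((Finset.univ : Finset (Fin m)).filter (fun j : Fin m => (j : ℕ) < (i : ℕ))).image s).filter
      (fun a => a < s i)).card +
    (if ∃ j : Fin m, (j : ℕ) < (i : ℕ) ∧ s j = s i then 1 else 1/2)

open Classical

/-- For `a ∈ P`, `a < c` iff the rank of `a` in `P` is smaller than the rank of `c`. -/
lemma rank_lt_iff {α : Type*} [LinearOrder α] (P : Finset α) {a : α} (c : α) (ha : a ∈ P) :
    a < c ↔ (P.filter (fun x => x < a)).card < (P.filter (fun x => x < c)).card := by
  constructor
  · intro h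
    apply Finset.card_lt_card
    constructor
    · intro x hx
      simp only [Finset.mem_filter] at hx ⊢
      exact ⟨hx.1, hx.2.trans h⟩
    · intro hsub
      have := hsub (Finset.mem_filter.mpr ⟨ha, h⟩)
      simp at this
  · intro h
    by_contra hc
    push_neg at hc
    have hsub : P.filter (fun x => x < c) ⊆ P.filter (fun x => x < a) := by
      intro x hx
      simp only [Finset.mem_filter] at hx ⊢
      exact ⟨hx.1, lt_of_lt_of_le hx.2 hc⟩
    have := Finset.card_le_card hsub
    omega

lemma card_image_compat {m : ℕ} {α : Type*} [LinearOrder α] (s t : Fin m → α)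
    (I : Finset (Fin m))
    (h : ∀ i ∈ I, ∀ k ∈ I, (s i = s k ↔ t i = t k)) :
    (I.image s).card = (I.image t).card := by
  refine Finset.card_bij (fun a ha => t (Finset.mem_image.mp ha).choose) ?_ ?_ ?_
  · intro a ha
    obtain ⟨hmem, -⟩ := (Finset.mem_image.mp ha).choose_spec
    exact Finset.mem_image_of_mem t hmem
  · intro a ha b hb hab
    obtain ⟨hma, hsa⟩ := (Finset.mem_image.mp ha).choose_spec
    obtain ⟨hmb, hsb⟩ := (Finset.mem_image.mp hb).choose_spec
    rw [← hsa, ← hsb]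
    exact (h _ hma _ hmb).mpr hab
  · intro b hb
    obtain ⟨k, hk, hkb⟩ := Finset.mem_image.mp hb
    refine ⟨s k, Finset.mem_image_of_mem s hk, ?_⟩
    obtain ⟨hm, hseq⟩ := (Finset.mem_image.mp (Finset.mem_image_of_mem s hk)).choose_spec
    rw [← hkb]
    exact (h _ hm _ hk).mp hseq

lemma pattern_eq {m : ℕ} {α : Type*} [LinearOrder α] (s t : Fin m → α)
    (hE : rankEncode s = rankEncode t) :
    ∀ i k : Fin m, (s i < s k ↔ t i < t k) ∧ (s i = s k ↔ t i = t k) := by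
  suffices H : ∀ n, ∀ i k : Fin m, i.val < n → k.val < n →
      ((s i < s k ↔ t i < t k) ∧ (s i = s k ↔ t i = t k)) by
    exact fun i k => H m i k i.isLt k.isLt
  intro n
  induction n with
  | zero => intro i k hi hk; omega
  | succ n IH =>
    have step : ∀ j : Fin m, j.val = n → ∀ i : Fin m, i.val < n →
        ((s i < s j ↔ t i < t j) ∧ (s i = s j ↔ t i = t j)) := by
      intro j hj i hi
      have hij : i.val < j.val := by omega
      set I : Finset (Fin m) := Finset.univ.filter (fun k : Fin m => (k : ℕ) < (j : ℕ)) with hI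
      have hmemI : ∀ k : Fin m, k.val < j.val → k ∈ I := by
        intro k hk
        simp only [hI, Finset.mem_filter, Finset.mem_univ, true_and]
        exact hk
      -- IH restated for indices below j
      have IH' : ∀ a b : Fin m, a.val < j.val → b.val < j.val →
          ((s a < s b ↔ t a < t b) ∧ (s a = s b ↔ t a = t b)) := by
        intro a b ha hb
        exact IH a b (by omega) (by omega)
      -- rank correspondence for prefix indices
      have key : ∀ k : Fin m, k.val < j.val →
          ((I.image s).filter (fun x => x < s k)).card =
          ((I.image t).filter (fun x => x < t k)).card := by
        intro k hk
        rw [Finset.filter_image, Finset.filter_image]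
        have hfil : I.filter (fun x => s x < s k) = I.filter (fun x => t x < t k) := by
          ext x
          simp only [Finset.mem_filter, hI, Finset.mem_univ, true_and]
          constructor
          · rintro ⟨hx, hlt⟩
            exact ⟨hx, ((IH' x k hx hk).1).mp hlt⟩
          · rintro ⟨hx, hlt⟩
            exact ⟨hx, ((IH' x k hx hk).1).mpr hlt⟩
        rw [hfil]
        apply card_image_compat
        intro a ha b hb
        simp only [hI, Finset.mem_filter, Finset.mem_univ, true_and] at ha hb
        exact (IH' a b ha.1 hb.1).2
      have hEj := congrFun hE j
      unfold rankEncode at hEj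
      by_cases hs : ∃ k : Fin m, (k : ℕ) < (j : ℕ) ∧ s k = s j
      · by_cases ht : ∃ k : Fin m, (k : ℕ) < (j : ℕ) ∧ t k = t j
        · -- both old
          rw [if_pos hs, if_pos ht] at hEj
          have hd : ((I.image s).filter (fun x => x < s j)).card =
              ((I.image t).filter (fun x => x < t j)).card := by
            have : (((I.image s).filter (fun x => x < s j)).card : ℚ) =
                ((I.image t).filter (fun x => x < t j)).card := by
              have := hEj
              simp only [hI] at this ⊢
              linarith
            exact_mod_cast this
          obtain ⟨k, hk, hsk⟩ := hs
          obtain ⟨l, hl, htl⟩ := ht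
          have hkl : t k = t l := by
            have h1 : ((I.image t).filter (fun x => x < t k)).card =
                ((I.image t).filter (fun x => x < t l)).card := by
              rw [← key k hk, hsk, hd, htl]
            rcases lt_trichotomy (t k) (t l) with h | h | h
            · have := (rank_lt_iff (I.image t) (t l)
                (Finset.mem_image_of_mem t (hmemI k hk))).mp h
              omega
            · exact h
            · have := (rank_lt_iff (I.image t) (t k)
                (Finset.mem_image_of_mem t (hmemI l hl))).mp h
              omega
          constructor
          · rw [← hsk, ← htl, ← hkl]
            exact (IH' i k hij hk).1
          · rw [← hsk, ← htl, ← hkl]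
            exact (IH' i k hij hk).2
        · -- mismatch: contradiction
          exfalso
          rw [if_pos hs, if_neg ht] at hEj
          set a := (((Finset.univ.filter (fun k : Fin m => (k : ℕ) < (j : ℕ))).image s).filter
            (fun x => x < s j)).card
          set b := (((Finset.univ.filter (fun k : Fin m => (k : ℕ) < (j : ℕ))).image t).filter
            (fun x => x < t j)).card
          have h2 : (2 * a + 2 : ℚ) = 2 * b + 1 := by linarith
          have h3 : 2 * a + 2 = 2 * b + 1 := by exact_mod_cast h2
          omega
      · by_cases ht : ∃ k : Fin m, (k : ℕ) < (j : ℕ) ∧ t k = t j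
        · exfalso
          rw [if_neg hs, if_pos ht] at hEj
          set a := (((Finset.univ.filter (fun k : Fin m => (k : ℕ) < (j : ℕ))).image s).filter
            (fun x => x < s j)).card
          set b := (((Finset.univ.filter (fun k : Fin m => (k : ℕ) < (j : ℕ))).image t).filter
            (fun x => x < t j)).card
          have h2 : (2 * a + 1 : ℚ) = 2 * b + 2 := by linarith
          have h3 : 2 * a + 1 = 2 * b + 2 := by exact_mod_cast h2
          omega
        · -- both new
          rw [if_neg hs, if_neg ht] at hEj
          have hd : ((I.image s).filter (fun x => x < s j)).card =
              ((I.image t).filter (fun x => x < t j)).card := by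
            have : (((I.image s).filter (fun x => x < s j)).card : ℚ) =
                ((I.image t).filter (fun x => x < t j)).card := by
              simp only [hI] at hEj ⊢
              linarith
            exact_mod_cast this
          push_neg at hs ht
          constructor
          · rw [rank_lt_iff (I.image s) (s j) (Finset.mem_image_of_mem s (hmemI i hij)),
              rank_lt_iff (I.image t) (t j) (Finset.mem_image_of_mem t (hmemI i hij)),
              key i hij, hd]
          · exact iff_of_false (hs i hij) (ht i hij)
    intro i k hi hk
    rcases Nat.lt_or_ge i.val n with hi' | hi'
    · rcases Nat.lt_or_ge k.val n with hk' | hk'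
      · exact IH i k hi' hk'
      · exact step k (by omega) i hi'
    · rcases Nat.lt_or_ge k.val n with hk' | hk'
      · obtain ⟨h1, h2⟩ := step i (by omega) k hk'
        constructor
        · rw [lt_iff_not_ge, lt_iff_not_ge, le_iff_lt_or_eq, le_iff_lt_or_eq, h1, h2]
        · rw [eq_comm, h2, eq_comm]
      · have : i = k := Fin.ext (by omega)
        subst this
        simp

open Finset in
theorem eq_of_rankEncode_eq_of_count_eq {m : ℕ} {α : Type*} [LinearOrder α]
    (s t : Fin m → α)
    (hE : rankEncode s = rankEncode t)
    (hcount : ∀ a : α,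
      ((Finset.univ : Finset (Fin m)).filter (fun i => s i = a)).card =
        ((Finset.univ : Finset (Fin m)).filter (fun i => t i = a)).card) :
    s = t := by
  have hpat := pattern_eq s t hE
  -- multiset of values is equal
  have hms : (Finset.univ : Finset (Fin m)).val.map s = (Finset.univ : Finset (Fin m)).val.map t := by
    rw [Multiset.ext]
    intro a
    rw [Multiset.count_map, Multiset.count_map]
    have := hcount a
    have h1 : ∀ (u : Fin m → α),
        (Multiset.filter (fun i => a = u i) (Finset.univ : Finset (Fin m)).val).card =
        ((Finset.univ : Finset (Fin m)).filter (fun i => u i = a)).card := by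
      intro u
      have h0 : ((Finset.univ : Finset (Fin m)).filter (fun i => u i = a)).card =
          (Multiset.filter (fun i => u i = a) (Finset.univ : Finset (Fin m)).val).card := rfl
      rw [h0]
      congr 1
      apply Multiset.filter_congr
      intro x _
      exact eq_comm
    rw [h1 s, h1 t, this]
  have hlt : ∀ a : α,
      ((Finset.univ : Finset (Fin m)).filter (fun j => s j < a)).card =
        ((Finset.univ : Finset (Fin m)).filter (fun j => t j < a)).card := by
    intro a
    have h1 : ∀ (u : Fin m → α),
        ((Finset.univ : Finset (Fin m)).filter (fun j => u j < a)).card =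
        Multiset.countP (fun x => x < a) ((Finset.univ : Finset (Fin m)).val.map u) := by
      intro u
      rw [Multiset.countP_map]
      rfl
    rw [h1 s, h1 t, hms]
  funext i
  by_contra hne
  have hA : ((Finset.univ : Finset (Fin m)).filter (fun j => s j < s i)).card =
      ((Finset.univ : Finset (Fin m)).filter (fun j => t j < t i)).card := by
    congr 1
    ext j
    simp only [Finset.mem_filter, Finset.mem_univ, true_and]
    exact (hpat j i).1
  have hC : ((Finset.univ : Finset (Fin m)).filter (fun j => t j < s i)).card =
      ((Finset.univ : Finset (Fin m)).filter (fun j => t j < t i)).card := by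
    rw [← hlt (s i), hA]
  have hsi_t : 0 < ((Finset.univ : Finset (Fin m)).filter (fun j => t j = s i)).card := by
    rw [← hcount (s i)]
    exact Finset.card_pos.mpr ⟨i, by simp⟩
  have hsplit : ∀ (b : α),
      ((Finset.univ : Finset (Fin m)).filter (fun j => t j ≤ b)).card =
      ((Finset.univ : Finset (Fin m)).filter (fun j => t j < b)).card +
      ((Finset.univ : Finset (Fin m)).filter (fun j => t j = b)).card := by
    intro b
    rw [← Finset.card_union_of_disjoint]
    · congr 1
      ext j
      simp [le_iff_lt_or_eq]
    · rw [Finset.disjoint_left]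
      intro j hj1 hj2
      simp only [Finset.mem_filter] at hj1 hj2
      exact absurd hj2.2 (ne_of_lt hj1.2)
  rcases lt_trichotomy (s i) (t i) with h | h | h
  · have hsub : ((Finset.univ : Finset (Fin m)).filter (fun j => t j ≤ s i)).card ≤
        ((Finset.univ : Finset (Fin m)).filter (fun j => t j < t i)).card := by
      apply Finset.card_le_card
      intro j hj
      simp only [Finset.mem_filter] at hj ⊢
      exact ⟨hj.1, lt_of_le_of_lt hj.2 h⟩
    have := hsplit (s i)
    omega
  · exact hne h
  · have hti_t : 0 < ((Finset.univ : Finset (Fin m)).filter (fun j => t j = t i)).card :=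
      Finset.card_pos.mpr ⟨i, by simp⟩
    have hsub : ((Finset.univ : Finset (Fin m)).filter (fun j => t j ≤ t i)).card ≤
        ((Finset.univ : Finset (Fin m)).filter (fun j => t j < s i)).card := by
      apply Finset.card_le_card
      intro j hj
      simp only [Finset.mem_filter] at hj ⊢
      exact ⟨hj.1, lt_of_le_of_lt hj.2 h⟩
    have := hsplit (t i)
    omega
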